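/- For Schwartz functions Φ₁, Φ₂ on ℝ and ξ ≠ 0, the orbital integral of Φ = Φ₁ ⊗ Φ₂ factors through Mellin transforms: ∫_{ℝ^×} |ξ|^{1/2} O_ξ(Φ) χ(ξ)⁻¹ d^×ξ = ζ(Φ₁, χ⁻¹, 1/2) · ζ(Φ₂, χ⁻¹, 1/2), where O_ξ(Φ) = ∫ Φ₁(t)Φ₂(ξ/t) |t|⁻¹ dt, ζ(φ, χ, s) = ∫_{ℝ^×} φ(x) χ(x) |x|^s d^×x, and χ = sgn^ε |·|^{iτ} is a unitary character, with all integrals absolutely convergent. -/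

import Mathlib

open MeasureTheory Set

namespace Stmt5Aux


lemma sign_mul' {a b : ℝ} (ha : a ≠ 0) (hb : b ≠ 0) :
    Real.sign (a * b) = Real.sign a * Real.sign b := by
  rcases ha.lt_or_gt with h | h <;> rcases hb.lt_or_gt with h' | h'
  · rw [Real.sign_of_pos (mul_pos_of_neg_of_neg h h'), Real.sign_of_neg h, Real.sign_of_neg h']
    norm_num
  · rw [Real.sign_of_neg (mul_neg_of_neg_of_pos h h'), Real.sign_of_neg h, Real.sign_of_pos h']
    norm_num
  · rw [Real.sign_of_neg (mul_neg_of_pos_of_neg h h'), Real.sign_of_pos h, Real.sign_of_neg h']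
    norm_num
  · rw [Real.sign_of_pos (mul_pos h h'), Real.sign_of_pos h, Real.sign_of_pos h']
    norm_num

lemma measurable_sign : Measurable Real.sign := by
  have h : Real.sign = fun r : ℝ => if r < 0 then (-1 : ℝ) else if 0 < r then 1 else 0 := rfl
  rw [h]
  exact Measurable.ite (measurableSet_lt measurable_id measurable_const) measurable_const
    (Measurable.ite (measurableSet_lt measurable_const measurable_id) measurable_const
      measurable_const)

lemma abs_rpow_split (x : ℝ) :
    |x| ^ (-(1:ℝ)/2) = x ^ (-(1:ℝ)/2) + (-x) ^ (-(1:ℝ)/2) := by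
  have hcos : Real.cos (-(1:ℝ)/2 * Real.pi) = 0 := by
    rw [show (-(1:ℝ)/2 * Real.pi) = -(Real.pi/2) by ring, Real.cos_neg, Real.cos_pi_div_two]
  rcases lt_trichotomy x 0 with hx | rfl | hx
  · rw [abs_of_neg hx, Real.rpow_def_of_neg hx, hcos, mul_zero, zero_add]
  · simp [Real.zero_rpow (by norm_num : (-(1:ℝ)/2) ≠ 0)]
  · rw [abs_of_pos hx, Real.rpow_def_of_neg (neg_lt_zero.mpr hx), hcos, mul_zero, add_zero]

lemma weight_intervalIntegrable :
    IntervalIntegrable (fun x : ℝ => |x| ^ (-(1:ℝ)/2)) volume (-1) 1 := by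
  have h1 : IntervalIntegrable (fun x : ℝ => x ^ (-(1:ℝ)/2)) volume (-1) 1 :=
    intervalIntegral.intervalIntegrable_rpow' (by norm_num)
  have h2 : IntervalIntegrable (fun x : ℝ => (-x) ^ (-(1:ℝ)/2)) volume (-1) 1 := by
    have := intervalIntegral.intervalIntegrable_rpow' (a := 1) (b := -1)
      (r := (-(1:ℝ)/2)) (by norm_num)
    simpa using (IntervalIntegrable.iff_comp_neg enorm_ne_top).mp this
  simpa only [← abs_rpow_split] using h1.add h2

lemma real_weight (x : ℝ) : |x| ^ ((1:ℝ)/2) * |x|⁻¹ = |x| ^ (-(1:ℝ)/2) := by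
  rcases eq_or_ne x 0 with rfl | hx
  · simp [Real.zero_rpow (by norm_num : ((1:ℝ)/2) ≠ 0),
      Real.zero_rpow (by norm_num : (-(1:ℝ)/2) ≠ 0)]
  · have h : (0:ℝ) < |x| := abs_pos.mpr hx
    rw [← Real.rpow_neg_one |x|, ← Real.rpow_add h]
    norm_num

lemma integrable_schwartz_weight (Φ : SchwartzMap ℝ ℂ) {c : ℝ → ℂ}
    (hm : AEStronglyMeasurable (fun x => Φ x * c x) volume)
    (hb : ∀ x : ℝ, x ≠ 0 → ‖c x‖ ≤ |x| ^ (-(1:ℝ)/2)) :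
    Integrable (fun x : ℝ => Φ x * c x) := by
  obtain ⟨C, hC⟩ := Φ.decay 0 0
  have hC' : ∀ x : ℝ, ‖Φ x‖ ≤ C := by
    intro x
    simpa using hC.2 x
  have hCn : 0 ≤ C := le_trans (norm_nonneg _) (hC' 0)
  have h0 : (volume : Measure ℝ) {(0:ℝ)} = 0 := measure_singleton 0
  have hae : ∀ᵐ x : ℝ, x ≠ 0 := by
    rw [ae_iff]
    simpa using h0
  have h1 : IntegrableOn (fun x : ℝ => Φ x * c x) (Ioc (-1:ℝ) 1) := by
    have hw : IntegrableOn (fun x : ℝ => |x| ^ (-(1:ℝ)/2)) (Ioc (-1:ℝ) 1) := by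
      have := weight_intervalIntegrable
      rwa [intervalIntegrable_iff, uIoc_of_le (by norm_num : (-1:ℝ) ≤ 1)] at this
    refine Integrable.mono' (hw.const_mul C) hm.restrict ?_
    filter_upwards [ae_restrict_of_ae hae] with x hx
    calc ‖Φ x * c x‖ ≤ C * ‖c x‖ := by
          rw [norm_mul]; exact mul_le_mul_of_nonneg_right (hC' x) (norm_nonneg _)
      _ ≤ C * (|x| ^ (-(1:ℝ)/2)) := mul_le_mul_of_nonneg_left (hb x hx) hCn
  have h2 : IntegrableOn (fun x : ℝ => Φ x * c x) (Ioc (-1:ℝ) 1)ᶜ := by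
    refine Integrable.mono' (Φ.integrable.norm.restrict) hm.restrict ?_
    filter_upwards [self_mem_ae_restrict (measurableSet_Ioc.compl)] with x hx
    have hx' : ¬(-1 < x ∧ x ≤ 1) := by simpa [Set.mem_Ioc] using hx
    have hx1 : (1:ℝ) ≤ |x| := by
      rcases not_and_or.mp hx' with h | h
      · push_neg at h
        rw [abs_of_nonpos (by linarith)]; linarith
      · push_neg at h
        rw [abs_of_pos (by linarith)]; linarith
    have hx0 : x ≠ 0 := by
      intro h; rw [h, abs_zero] at hx1; linarith
    calc ‖Φ x * c x‖ ≤ ‖Φ x‖ * (|x| ^ (-(1:ℝ)/2)) := by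
          rw [norm_mul]; exact mul_le_mul_of_nonneg_left (hb x hx0) (norm_nonneg _)
      _ ≤ ‖Φ x‖ * 1 := by
          refine mul_le_mul_of_nonneg_left ?_ (norm_nonneg _)
          exact Real.rpow_le_one_of_one_le_of_nonpos hx1 (by norm_num)
      _ = ‖Φ x‖ := mul_one _
  have : IntegrableOn (fun x : ℝ => Φ x * c x) univ := by
    rw [← Set.union_compl_self (Ioc (-1:ℝ) 1)]
    exact h1.union h2
  rwa [integrableOn_univ] at this




variable {ε : ℕ} {τ : ℝ} {χ : ℝ → ℂ}
  (hχ : ∀ x : ℝ, χ x = (Real.sign x : ℂ) ^ ε * ((|x| : ℝ) : ℂ) ^ (Complex.I * (τ : ℂ)))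

include hχ

lemma chi_norm {x : ℝ} (hx : x ≠ 0) : ‖χ x‖ = 1 := by
  rw [hχ x, norm_mul, norm_pow, Complex.norm_real, Real.norm_eq_abs]
  have h1 : |Real.sign x| = 1 := by
    rcases Real.sign_apply_eq_of_ne_zero x hx with h | h <;> rw [h] <;> norm_num
  have h2 : ‖((|x| : ℝ) : ℂ) ^ (Complex.I * (τ : ℂ))‖ = 1 := by
    rw [Complex.norm_cpow_eq_rpow_re_of_pos (abs_pos.mpr hx)]
    have : (Complex.I * (τ : ℂ)).re = 0 := by simp
    rw [this, Real.rpow_zero]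
  rw [h1, h2, one_pow, one_mul]

lemma chi_mul {a b : ℝ} (ha : a ≠ 0) (hb : b ≠ 0) : χ (a * b) = χ a * χ b := by
  have hsgn : Real.sign (a * b) = Real.sign a * Real.sign b := by
    rcases ha.lt_or_gt with h | h <;> rcases hb.lt_or_gt with h' | h'
    · rw [Real.sign_of_pos (mul_pos_of_neg_of_neg h h'), Real.sign_of_neg h,
        Real.sign_of_neg h']; norm_num
    · rw [Real.sign_of_neg (mul_neg_of_neg_of_pos h h'), Real.sign_of_neg h,
        Real.sign_of_pos h']; norm_num
    · rw [Real.sign_of_neg (mul_neg_of_pos_of_neg h h'), Real.sign_of_pos h,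
        Real.sign_of_neg h']; norm_num
    · rw [Real.sign_of_pos (mul_pos h h'), Real.sign_of_pos h, Real.sign_of_pos h']; norm_num
  rw [hχ (a * b), hχ a, hχ b, hsgn, abs_mul, Complex.ofReal_mul, Complex.ofReal_mul,
    mul_pow, Complex.mul_cpow_ofReal_nonneg (abs_nonneg a) (abs_nonneg b)]
  ring

lemma chi_meas : ∃ χm : ℝ → ℂ, Measurable χm ∧ ∀ x : ℝ, x ≠ 0 → χ x = χm x := by
  refine ⟨fun x => (Real.sign x : ℂ) ^ ε *
    Complex.exp ((Real.log |x| : ℂ) * (Complex.I * (τ : ℂ))), ?_, ?_⟩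
  · apply Measurable.mul
    · exact (Complex.measurable_ofReal.comp measurable_sign).pow_const ε
    · exact Complex.measurable_exp.comp
        (((Complex.measurable_ofReal.comp (Real.measurable_log.comp measurable_abs))).mul_const _)
  · intro x hx
    rw [hχ x]
    congr 1
    rw [Complex.cpow_def_of_ne_zero (by exact_mod_cast abs_ne_zero.mpr hx),
      Complex.ofReal_log (abs_nonneg x)]

end Stmt5Aux

open Stmt5Aux in
/-- The Mellin transform of the orbital integrals of `Φ₁ ⊗ Φ₂` factors as a product of
Tate integrals at `s = 1/2`, for the unitary character `χ = sgn^ε |·|^{iτ}`, with all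
integrals absolutely convergent. -/
theorem stmt_5 (Φ₁ Φ₂ : SchwartzMap ℝ ℂ) (ε : ℕ) (τ : ℝ) (χ : ℝ → ℂ)
    (hχ : ∀ x : ℝ, χ x = (Real.sign x : ℂ) ^ ε * ((|x| : ℝ) : ℂ) ^ (Complex.I * (τ : ℂ))) :
    Integrable (fun x : ℝ => Φ₁ x * (χ x)⁻¹ * ((|x| ^ ((1:ℝ)/2) * |x|⁻¹ : ℝ) : ℂ)) ∧
    Integrable (fun x : ℝ => Φ₂ x * (χ x)⁻¹ * ((|x| ^ ((1:ℝ)/2) * |x|⁻¹ : ℝ) : ℂ)) ∧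
    Integrable (fun ξ : ℝ => ((|ξ| ^ ((1:ℝ)/2) * |ξ|⁻¹ : ℝ) : ℂ) * (χ ξ)⁻¹ *
        ∫ t : ℝ, Φ₁ t * Φ₂ (ξ / t) * ((|t|⁻¹ : ℝ) : ℂ)) ∧
    (∫ ξ : ℝ, ((|ξ| ^ ((1:ℝ)/2) * |ξ|⁻¹ : ℝ) : ℂ) * (χ ξ)⁻¹ *
        ∫ t : ℝ, Φ₁ t * Φ₂ (ξ / t) * ((|t|⁻¹ : ℝ) : ℂ))
      = (∫ x : ℝ, Φ₁ x * (χ x)⁻¹ * ((|x| ^ ((1:ℝ)/2) * |x|⁻¹ : ℝ) : ℂ)) *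
        (∫ x : ℝ, Φ₂ x * (χ x)⁻¹ * ((|x| ^ ((1:ℝ)/2) * |x|⁻¹ : ℝ) : ℂ)) := by
  have hae : ∀ᵐ x : ℝ, x ≠ 0 := by
    rw [ae_iff]
    simp only [not_not]
    simpa using measure_singleton (0 : ℝ)
  set W : ℝ → ℂ := fun x => (χ x)⁻¹ * ((|x| ^ ((1:ℝ)/2) * |x|⁻¹ : ℝ) : ℂ) with hWdef
  obtain ⟨χm, hχm_meas, hχm_eq⟩ := chi_meas hχ
  set Wm : ℝ → ℂ := fun x => (χm x)⁻¹ * ((|x| ^ ((1:ℝ)/2) * |x|⁻¹ : ℝ) : ℂ) with hWmdef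
  have hrm : Measurable fun x : ℝ => ((|x| ^ ((1:ℝ)/2) * |x|⁻¹ : ℝ) : ℂ) := by
    apply Complex.measurable_ofReal.comp
    exact ((measurable_id.abs.pow_const _).mul measurable_id.abs.inv)
  have hWm_meas : Measurable Wm := hχm_meas.inv.mul hrm
  have hWeq : ∀ x : ℝ, x ≠ 0 → W x = Wm x := by
    intro x hx
    simp only [hWdef, hWmdef, hχm_eq x hx]
  have hWnorm : ∀ x : ℝ, x ≠ 0 → ‖W x‖ = |x| ^ (-(1:ℝ)/2) := by
    intro x hx
    simp only [hWdef]
    rw [norm_mul, norm_inv, chi_norm hχ hx, inv_one, one_mul, Complex.norm_real,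
      Real.norm_eq_abs, abs_of_nonneg (mul_nonneg (Real.rpow_nonneg (abs_nonneg x) _)
        (inv_nonneg.mpr (abs_nonneg x))), real_weight]
  have hWmul : ∀ a b : ℝ, a ≠ 0 → b ≠ 0 → W (a * b) = W a * W b := by
    intro a b ha hb
    simp only [hWdef, real_weight, chi_mul hχ ha hb, mul_inv, abs_mul,
      Real.mul_rpow (abs_nonneg a) (abs_nonneg b), Complex.ofReal_mul]
    ring
  have hWsplit : ∀ t ξ : ℝ, t ≠ 0 → ξ ≠ 0 → W ξ = W t * W (ξ / t) := by
    intro t ξ ht hξ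
    rw [← hWmul t (ξ / t) ht (div_ne_zero hξ ht), mul_comm, div_mul_cancel₀ _ ht]
  -- integrability of the two Tate integrands
  have hg₁ : Integrable (fun x : ℝ => Φ₁ x * W x) := by
    refine integrable_schwartz_weight Φ₁ ?_ (fun x hx => (hWnorm x hx).le)
    refine ((Φ₁.continuous.measurable.mul hWm_meas).aestronglyMeasurable).congr ?_
    filter_upwards [hae] with x hx
    rw [hWeq x hx]; rfl
  have hg₂ : Integrable (fun x : ℝ => Φ₂ x * W x) := by
    refine integrable_schwartz_weight Φ₂ ?_ (fun x hx => (hWnorm x hx).le)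
    refine ((Φ₂.continuous.measurable.mul hWm_meas).aestronglyMeasurable).congr ?_
    filter_upwards [hae] with x hx
    rw [hWeq x hx]; rfl
  -- the double-variable function
  set F : ℝ × ℝ → ℂ := fun p => W p.1 * (Φ₁ p.2 * Φ₂ (p.1 / p.2) * ((|p.2|⁻¹ : ℝ) : ℂ))
    with hFdef
  have hae1 : ∀ᵐ p : ℝ × ℝ ∂(volume.prod volume), p.1 ≠ 0 := by
    rw [ae_iff]
    refine measure_mono_null (fun p hp => ?_)
      (show (volume.prod volume) (({0} : Set ℝ) ×ˢ (univ : Set ℝ)) = 0 by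
        rw [Measure.prod_prod]; simp)
    simp only [Set.mem_setOf_eq, not_not] at hp
    exact ⟨hp, Set.mem_univ _⟩
  have hFm : AEStronglyMeasurable F (volume.prod volume) := by
    have hFm_meas : Measurable fun p : ℝ × ℝ =>
        Wm p.1 * (Φ₁ p.2 * Φ₂ (p.1 / p.2) * ((|p.2|⁻¹ : ℝ) : ℂ)) := by
      refine (hWm_meas.comp measurable_fst).mul ?_
      refine ((Φ₁.continuous.measurable.comp measurable_snd).mul
        (Φ₂.continuous.measurable.comp (measurable_fst.div measurable_snd))).mul ?_
      exact Complex.measurable_ofReal.comp (measurable_snd.abs.inv)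
    refine hFm_meas.aestronglyMeasurable.congr ?_
    filter_upwards [hae1] with p hp
    simp only [hFdef, hWeq p.1 hp]
  -- slicewise integrability
  have key_t : ∀ t : ℝ, t ≠ 0 → Integrable (fun ξ : ℝ => W ξ * Φ₂ (ξ / t)) := by
    intro t ht
    have h1 : Integrable (fun ξ : ℝ => W t * ((fun u => Φ₂ u * W u) (ξ / t))) :=
      (hg₂.comp_div ht).const_mul _
    refine h1.congr ?_
    filter_upwards [hae] with ξ hξ
    rw [hWsplit t ξ ht hξ]
    ring
  have key_norm : ∀ t : ℝ, t ≠ 0 →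
      (∫ ξ : ℝ, ‖W ξ * Φ₂ (ξ / t)‖) = |t| * (‖W t‖ * ∫ u : ℝ, ‖Φ₂ u * W u‖) := by
    intro t ht
    have hcongr : (fun ξ : ℝ => ‖W ξ * Φ₂ (ξ / t)‖) =ᵐ[volume]
        fun ξ => ‖W t‖ * ‖(fun u => Φ₂ u * W u) (ξ / t)‖ := by
      filter_upwards [hae] with ξ hξ
      rw [hWsplit t ξ ht hξ]
      simp only [norm_mul]
      ring
    rw [integral_congr_ae hcongr, integral_const_mul,
      Measure.integral_comp_div (fun u : ℝ => ‖Φ₂ u * W u‖) t, smul_eq_mul]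
    ring
  have hFint : Integrable F (volume.prod volume) := by
    rw [integrable_prod_iff' hFm]
    constructor
    · filter_upwards [hae] with t ht
      refine ((key_t t ht).mul_const (Φ₁ t * ((|t|⁻¹ : ℝ) : ℂ))).congr ?_
      filter_upwards with ξ
      simp only [hFdef]
      ring
    · have heq : (fun t : ℝ => (∫ u : ℝ, ‖Φ₂ u * W u‖) * ‖Φ₁ t * W t‖) =ᵐ[volume]
          fun t : ℝ => ∫ ξ : ℝ, ‖F (ξ, t)‖ := by
        filter_upwards [hae] with t ht
        have hfn : (fun ξ : ℝ => ‖F (ξ, t)‖) =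
            fun ξ : ℝ => ‖W ξ * Φ₂ (ξ / t)‖ * (‖Φ₁ t‖ * |t|⁻¹) := by
          funext ξ
          simp only [hFdef, norm_mul, Complex.norm_real, Real.norm_eq_abs, abs_inv, abs_abs]
          ring
        rw [hfn, integral_mul_const, key_norm t ht, norm_mul]
        have h0 : |t| ≠ 0 := abs_ne_zero.mpr ht
        field_simp
      exact ((hg₁.norm.const_mul _).congr heq)
  -- identify the statement's outer integrand
  have hstmt3 : (fun ξ : ℝ => ((|ξ| ^ ((1:ℝ)/2) * |ξ|⁻¹ : ℝ) : ℂ) * (χ ξ)⁻¹ *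
      ∫ t : ℝ, Φ₁ t * Φ₂ (ξ / t) * ((|t|⁻¹ : ℝ) : ℂ)) = fun ξ : ℝ => ∫ t : ℝ, F (ξ, t) := by
    funext ξ
    rw [show ((|ξ| ^ ((1:ℝ)/2) * |ξ|⁻¹ : ℝ) : ℂ) * (χ ξ)⁻¹ = W ξ from mul_comm _ _]
    exact (integral_const_mul _ _).symm
  have hrew₁ : (fun x : ℝ => Φ₁ x * (χ x)⁻¹ * ((|x| ^ ((1:ℝ)/2) * |x|⁻¹ : ℝ) : ℂ)) =
      fun x : ℝ => Φ₁ x * W x := funext fun x => mul_assoc _ _ _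
  have hrew₂ : (fun x : ℝ => Φ₂ x * (χ x)⁻¹ * ((|x| ^ ((1:ℝ)/2) * |x|⁻¹ : ℝ) : ℂ)) =
      fun x : ℝ => Φ₂ x * W x := funext fun x => mul_assoc _ _ _
  refine ⟨by rw [hrew₁]; exact hg₁, by rw [hrew₂]; exact hg₂, ?_, ?_⟩
  · rw [hstmt3]
    exact hFint.integral_prod_left
  · have hswap : (∫ ξ : ℝ, ∫ t : ℝ, F (ξ, t)) = ∫ t : ℝ, ∫ ξ : ℝ, F (ξ, t) :=
      integral_integral_swap (f := fun ξ t => F (ξ, t)) hFint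
    have hinner : (fun t : ℝ => ∫ ξ : ℝ, F (ξ, t)) =ᵐ[volume]
        fun t : ℝ => (Φ₁ t * W t) * ∫ u : ℝ, Φ₂ u * W u := by
      filter_upwards [hae] with t ht
      have h0 : ((|t|⁻¹ : ℝ) : ℂ) * ((|t| : ℝ) : ℂ) = 1 := by
        rw [← Complex.ofReal_mul, inv_mul_cancel₀ (abs_ne_zero.mpr ht), Complex.ofReal_one]
      calc (∫ ξ : ℝ, F (ξ, t))
          = ∫ ξ : ℝ, (Φ₁ t * ((|t|⁻¹ : ℝ) : ℂ)) * (W ξ * Φ₂ (ξ / t)) := by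
            congr 1
            funext ξ
            simp only [hFdef]
            ring
        _ = (Φ₁ t * ((|t|⁻¹ : ℝ) : ℂ)) * ∫ ξ : ℝ, W ξ * Φ₂ (ξ / t) :=
            integral_const_mul _ _
        _ = (Φ₁ t * ((|t|⁻¹ : ℝ) : ℂ)) *
              ∫ ξ : ℝ, W t * ((fun u => Φ₂ u * W u) (ξ / t)) := by
            congr 1
            refine integral_congr_ae ?_
            filter_upwards [hae] with ξ hξ
            rw [hWsplit t ξ ht hξ]
            ring
        _ = (Φ₁ t * ((|t|⁻¹ : ℝ) : ℂ)) *
              (W t * (|t| • ∫ u : ℝ, Φ₂ u * W u)) := by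
            rw [integral_const_mul, Measure.integral_comp_div (fun u : ℝ => Φ₂ u * W u) t]
        _ = (Φ₁ t * W t) * ∫ u : ℝ, Φ₂ u * W u := by
            rw [Complex.real_smul]
            rw [show Φ₁ t * ((|t|⁻¹ : ℝ) : ℂ) * (W t * (((|t| : ℝ) : ℂ) *
              ∫ u : ℝ, Φ₂ u * W u)) = (((|t|⁻¹ : ℝ) : ℂ) * ((|t| : ℝ) : ℂ)) *
              ((Φ₁ t * W t) * ∫ u : ℝ, Φ₂ u * W u) from by ring, h0, one_mul]
    calc (∫ ξ : ℝ, ((|ξ| ^ ((1:ℝ)/2) * |ξ|⁻¹ : ℝ) : ℂ) * (χ ξ)⁻¹ *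
            ∫ t : ℝ, Φ₁ t * Φ₂ (ξ / t) * ((|t|⁻¹ : ℝ) : ℂ))
        = ∫ ξ : ℝ, ∫ t : ℝ, F (ξ, t) := by rw [hstmt3]
      _ = ∫ t : ℝ, ∫ ξ : ℝ, F (ξ, t) := hswap
      _ = ∫ t : ℝ, (Φ₁ t * W t) * ∫ u : ℝ, Φ₂ u * W u := integral_congr_ae hinner
      _ = (∫ t : ℝ, Φ₁ t * W t) * ∫ u : ℝ, Φ₂ u * W u := integral_mul_const _ _
      _ = _ := by rw [hrew₁, hrew₂]
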